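/- Let t* be a welfare-optimal single pooled test. If some individual i' ∈ t* has q_{i'} < 1/2, then prod_{i ∈ t* \ {i'}} q_i ≥ 1/2. More generally, a single optimal test contains at most one individual with healthy-probability strictly below 1/2. -/

import Mathlib

open Finset

/-- Probability of a health realization `ω` (true = healthy) under independent
healthy-probabilities `q`. -/
noncomputable def healthProb {n : ℕ} (q : Fin n → ℝ) (ω : Fin n → Bool) : ℝ :=
  ∏ i, if ω i then q i else 1 - q i

/-- Probability that individual `i` lies in at least one negative test of the regime `T`. -/
noncomputable def inNegProb {n B : ℕ} (q : Fin n → ℝ) (T : Fin B → Finset (Fin n))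
    (i : Fin n) : ℝ :=
  ∑ ω : Fin n → Bool,
    if ∃ j, i ∈ T j ∧ ∀ k ∈ T j, ω k = true then healthProb q ω else 0

/-- Expected welfare of a (possibly overlapping) testing regime `T`. -/
noncomputable def welfare {n B : ℕ} (q u : Fin n → ℝ) (T : Fin B → Finset (Fin n)) : ℝ :=
  ∑ i, u i * inNegProb q T i

/-- Stand-alone expected welfare of a single pooled test `t`. -/
noncomputable def testWelfare {n : ℕ} (q u : Fin n → ℝ) (t : Finset (Fin n)) : ℝ :=
  (∏ i ∈ t, q i) * ∑ i ∈ t, u i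

/-- Welfare of a non-overlapping testing regime, as a sum of stand-alone test welfares. -/
noncomputable def noWelfare {n B : ℕ} (q u : Fin n → ℝ) (T : Fin B → Finset (Fin n)) : ℝ :=
  ∑ j, testWelfare q u (T j)

/-- Probability that test `T j` is pivotal for individual `i`: `i ∈ T j`, test `T j` is
negative, and every earlier test containing `i` is positive. -/
noncomputable def pivotalProb {n B : ℕ} (q : Fin n → ℝ) (T : Fin B → Finset (Fin n))
    (i : Fin n) (j : Fin B) : ℝ :=
  ∑ ω : Fin n → Bool,
    if i ∈ T j ∧ (∀ k ∈ T j, ω k = true) ∧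
        (∀ j' : Fin B, j' < j → i ∈ T j' → ∃ k ∈ T j', ω k = false)
      then healthProb q ω else 0


/-- A welfare-optimal single pooled test contains at most one individual with
healthy-probability below 1/2, and if it contains such an individual `i'` then the
product of the healthy-probabilities of the remaining members is at least 1/2. -/
theorem stmt3 {n G : ℕ} (q u : Fin n → ℝ)
    (hq : ∀ i, 0 < q i ∧ q i ≤ 1) (hu : ∀ i, 0 < u i)
    (tstar : Finset (Fin n)) (hsize : tstar.card ≤ G)
    (hopt : ∀ t : Finset (Fin n), t.card ≤ G → testWelfare q u t ≤ testWelfare q u tstar) :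
    (∀ i' ∈ tstar, q i' < 1 / 2 → (1 : ℝ) / 2 ≤ ∏ i ∈ tstar.erase i', q i) ∧
      (tstar.filter fun i => q i < 1 / 2).card ≤ 1 := by
  have key : ∀ i' ∈ tstar, q i' < 1 / 2 → (1 : ℝ) / 2 ≤ ∏ i ∈ tstar.erase i', q i := by
    intro i' hi' hqi'
    set P := ∏ i ∈ tstar.erase i', q i with hPdef
    set S := ∑ i ∈ tstar.erase i', u i with hSdef
    have hP : 0 < P := Finset.prod_pos (fun i _ => (hq i).1)
    have hS : 0 ≤ S := Finset.sum_nonneg (fun i _ => (hu i).le)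
    have hq' : 0 < q i' := (hq i').1
    have hu' : 0 < u i' := hu i'
    have hprod : ∏ i ∈ tstar, q i = q i' * P := (Finset.mul_prod_erase _ _ hi').symm
    have hsum : ∑ i ∈ tstar, u i = u i' + S := (Finset.add_sum_erase _ _ hi').symm
    have hG1 : 1 ≤ G := le_trans (Finset.card_pos.mpr ⟨i', hi'⟩) hsize
    have h1 := hopt (tstar.erase i')
      (le_trans (Finset.card_le_card (Finset.erase_subset _ _)) hsize)
    have h2 := hopt {i'} (by simpa using hG1)
    rw [testWelfare, testWelfare, hprod, hsum] at h1
    rw [testWelfare, testWelfare, hprod, hsum] at h2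
    simp only [Finset.prod_singleton, Finset.sum_singleton] at h2
    have hB : S ≤ q i' * (u i' + S) := by
      have := (mul_le_mul_iff_right₀ hP).mp (by nlinarith : P * S ≤ P * (q i' * (u i' + S)))
      linarith
    have hA : u i' ≤ P * (u i' + S) := by
      have := (mul_le_mul_iff_right₀ hq').mp (by nlinarith : q i' * u i' ≤ q i' * (P * (u i' + S)))
      linarith
    have hpos : 0 < u i' + S := by linarith
    have hfin : (1 - q i') * (u i' + S) ≤ P * (u i' + S) := by nlinarith
    have := le_of_mul_le_mul_right (by linarith [hfin] : (1 - q i') * (u i' + S) ≤ P * (u i' + S)) hpos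
    linarith
  refine ⟨key, ?_⟩
  by_contra hcard
  push_neg at hcard
  obtain ⟨i, hi, j, hj, hij⟩ := Finset.one_lt_card.mp hcard
  have hiq := Finset.mem_filter.mp hi
  have hjq := Finset.mem_filter.mp hj
  have hk := key i hiq.1 hiq.2
  have hjmem : j ∈ tstar.erase i := Finset.mem_erase.mpr ⟨hij.symm, hjq.1⟩
  have hle : ∏ k ∈ tstar.erase i, q k ≤ q j := by
    rw [← Finset.mul_prod_erase _ _ hjmem]
    have hone : ∏ k ∈ (tstar.erase i).erase j, q k ≤ 1 :=
      Finset.prod_le_one (fun k _ => (hq k).1.le) (fun k _ => (hq k).2)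
    nlinarith [(hq j).1]
  linarith [hjq.2]
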